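/- arXiv:1709.06411 — 4 statements merged into one kernel-verified Lean document; each statement's English description precedes it below -/
import Mathlib

section
/- There exist constants C ≥ 1 and c ∈ (0,1] such that for all n ≥ 2, P(for every k with 1 ≤ k ≤ 2n, |S_k| ≤ m_n / ln n) ≤ C exp(−c n^{1/3} (ln n)^{2/3}). (Tube estimate for the simple random walk.) -/
open MeasureTheory ProbabilityTheory Filter
open scoped ENNReal NNReal

section Aux

variable {Ω : Type*} [MeasurableSpace Ω] (P : Measure Ω) [IsProbabilityMeasure P]
  (X : ℕ → Ω → ℝ)

lemma tube_pm (hmeas : ∀ i, Measurable (X i))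
    (hX : ∀ i, P {ω | X i ω = 1} = 1/2 ∧ P {ω | X i ω = -1} = 1/2) (i : ℕ) :
    ∀ᵐ ω ∂P, X i ω = 1 ∨ X i ω = -1 := by
  have hA : MeasurableSet {ω | X i ω = 1} := (hmeas i) (measurableSet_singleton 1)
  have hB : MeasurableSet {ω | X i ω = -1} := (hmeas i) (measurableSet_singleton (-1))
  have hd : Disjoint {ω | X i ω = 1} {ω | X i ω = -1} := by
    rw [Set.disjoint_left]
    rintro ω h1 h2
    simp only [Set.mem_setOf_eq] at h1 h2
    rw [h1] at h2; norm_num at h2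
  have hu : P ({ω | X i ω = 1} ∪ {ω | X i ω = -1}) = 1 := by
    rw [measure_union hd hB, (hX i).1, (hX i).2]
    rw [ENNReal.div_add_div_same]
    have h1 : (2:ℝ≥0∞) ≠ 0 := by norm_num
    have h2 : (2:ℝ≥0∞) ≠ ⊤ := by norm_num
    rw [show (1:ℝ≥0∞)+1 = 2 by norm_num, ENNReal.div_self h1 h2]
  have hcompl : P ({ω | X i ω = 1} ∪ {ω | X i ω = -1})ᶜ = 0 := by
    rw [measure_compl (hA.union hB) (measure_ne_top _ _), hu, measure_univ, tsub_self]
  have hset : {ω | ¬(X i ω = 1 ∨ X i ω = -1)} = ({ω | X i ω = 1} ∪ {ω | X i ω = -1})ᶜ := by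
    ext ω; simp [not_or]
  rw [ae_iff, hset]
  exact hcompl

lemma tube_mean (hmeas : ∀ i, Measurable (X i))
    (hX : ∀ i, P {ω | X i ω = 1} = 1/2 ∧ P {ω | X i ω = -1} = 1/2) (i : ℕ) :
    ∫ ω, X i ω ∂P = 0 := by
  have hA : MeasurableSet {ω | X i ω = 1} := (hmeas i) (measurableSet_singleton 1)
  have hB : MeasurableSet {ω | X i ω = -1} := (hmeas i) (measurableSet_singleton (-1))
  have heq : X i =ᵐ[P] ({ω | X i ω = 1}.indicator (fun _ => (1:ℝ)) +
      {ω | X i ω = -1}.indicator (fun _ => (-1:ℝ))) := by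
    filter_upwards [tube_pm P X hmeas hX i] with ω hω
    rcases hω with h | h
    · have hωA : ω ∈ {ω | X i ω = 1} := h
      have hωB : ω ∉ {ω | X i ω = -1} := by simp only [Set.mem_setOf_eq, h]; norm_num
      simp [Set.indicator_of_mem hωA, Set.indicator_of_notMem hωB, h]
    · have hωB : ω ∈ {ω | X i ω = -1} := h
      have hωA : ω ∉ {ω | X i ω = 1} := by simp only [Set.mem_setOf_eq, h]; norm_num
      simp [Set.indicator_of_mem hωB, Set.indicator_of_notMem hωA, h]
  rw [integral_congr_ae heq]
  simp only [Pi.add_apply]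
  rw [integral_add ((integrable_const (1:ℝ)).indicator hA)
    ((integrable_const (-1:ℝ)).indicator hB), integral_indicator_const _ hA,
    integral_indicator_const _ hB, measureReal_def, measureReal_def, (hX i).1, (hX i).2]
  norm_num

lemma tube_int {f : Ω → ℝ} (C : ℝ) (hf : Measurable f) (h : ∀ᵐ ω ∂P, |f ω| ≤ C) :
    Integrable f P :=
  (integrable_const C).mono' hf.aestronglyMeasurable (by simpa [Real.norm_eq_abs] using h)

lemma tube_Wbd (hmeas : ∀ i, Measurable (X i))
    (hX : ∀ i, P {ω | X i ω = 1} = 1/2 ∧ P {ω | X i ω = -1} = 1/2) (s : Finset ℕ) :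
    ∀ᵐ ω ∂P, |∑ i ∈ s, X i ω| ≤ (s.card : ℝ) := by
  have h : ∀ᵐ ω ∂P, ∀ i ∈ s, X i ω = 1 ∨ X i ω = -1 :=
    (ae_ball_iff s.countable_toSet).2 (fun i _ => tube_pm P X hmeas hX i)
  filter_upwards [h] with ω hω
  calc |∑ i ∈ s, X i ω| ≤ ∑ i ∈ s, |X i ω| := Finset.abs_sum_le_sum_abs _ _
    _ ≤ ∑ _i ∈ s, (1:ℝ) := Finset.sum_le_sum (fun i hi => by
        rcases hω i hi with h | h <;> simp [h])
    _ = s.card := by simp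

lemma tube_Wmeas (hmeas : ∀ i, Measurable (X i)) (s : Finset ℕ) :
    Measurable (fun ω => ∑ i ∈ s, X i ω) :=
  Finset.measurable_sum s (fun i _ => hmeas i)

lemma tube_intWk (hmeas : ∀ i, Measurable (X i))
    (hX : ∀ i, P {ω | X i ω = 1} = 1/2 ∧ P {ω | X i ω = -1} = 1/2) (s : Finset ℕ) (k : ℕ) :
    Integrable (fun ω => (∑ i ∈ s, X i ω)^k) P := by
  refine tube_int P ((s.card : ℝ)^k) ((tube_Wmeas X hmeas s).pow_const k) ?_
  filter_upwards [tube_Wbd P X hmeas hX s] with ω h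
  calc |(∑ i ∈ s, X i ω)^k| = |∑ i ∈ s, X i ω|^k := by rw [abs_pow]
    _ ≤ (s.card : ℝ)^k := pow_le_pow_left₀ (abs_nonneg _) h k

lemma tube_indep (hmeas : ∀ i, Measurable (X i))
    (hindep : iIndepFun X P) {s : Finset ℕ} {a : ℕ} (ha : a ∉ s) :
    IndepFun (X a) (fun ω => ∑ i ∈ s, X i ω) P := by
  have h := hindep.indepFun_finset_sum_of_notMem hmeas ha
  have he : (∑ j ∈ s, X j) = fun ω => ∑ i ∈ s, X i ω := by
    funext ω; simp
  rw [he] at h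
  exact h.symm

lemma tube_sq (hmeas : ∀ i, Measurable (X i))
    (hX : ∀ i, P {ω | X i ω = 1} = 1/2 ∧ P {ω | X i ω = -1} = 1/2) (i : ℕ) :
    ∀ᵐ ω ∂P, X i ω ^ 2 = 1 := by
  filter_upwards [tube_pm P X hmeas hX i] with ω h
  rcases h with h | h <;> rw [h] <;> norm_num

lemma tube_mom2 (hmeas : ∀ i, Measurable (X i))
    (hindep : iIndepFun X P)
    (hX : ∀ i, P {ω | X i ω = 1} = 1/2 ∧ P {ω | X i ω = -1} = 1/2) (s : Finset ℕ) :
    ∫ ω, (∑ i ∈ s, X i ω)^2 ∂P = (s.card : ℝ) := by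
  classical
  induction s using Finset.induction_on with
  | empty => simp
  | @insert a s ha ih =>
    simp only [Finset.sum_insert ha]
    have hW := tube_Wmeas X hmeas s
    have hintW1 := tube_intWk P X hmeas hX s 1
    simp only [pow_one] at hintW1
    have hintXa : Integrable (X a) P := by
      refine tube_int P 1 (hmeas a) ?_
      filter_upwards [tube_pm P X hmeas hX a] with ω h
      rcases h with h | h <;> rw [h] <;> norm_num
    have hintXW : Integrable (fun ω => X a ω * (∑ i ∈ s, X i ω)) P := by
      refine tube_int P (s.card : ℝ) ((hmeas a).mul hW) ?_
      filter_upwards [tube_pm P X hmeas hX a, tube_Wbd P X hmeas hX s] with ω h1 h2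
      rw [abs_mul]
      have : |X a ω| = 1 := by rcases h1 with h | h <;> rw [h] <;> norm_num
      rw [this, one_mul]; exact h2
    have hintW2 := tube_intWk P X hmeas hX s 2
    have hcongr : ∫ ω, (X a ω + ∑ i ∈ s, X i ω)^2 ∂P
        = ∫ ω, (1 + (2 * (X a ω * (∑ i ∈ s, X i ω)) + (∑ i ∈ s, X i ω)^2)) ∂P := by
      refine integral_congr_ae ?_
      filter_upwards [tube_sq P X hmeas hX a] with ω h
      have hexp : (X a ω + ∑ i ∈ s, X i ω)^2
          = X a ω^2 + (2 * (X a ω * (∑ i ∈ s, X i ω)) + (∑ i ∈ s, X i ω)^2) := by ring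
      rw [hexp, h]
    rw [hcongr]
    have hIprod : ∫ ω, X a ω * (∑ i ∈ s, X i ω) ∂P = 0 := by
      have h := (tube_indep P X hmeas hindep ha).integral_mul_eq_mul_integral
        (hmeas a).aestronglyMeasurable hW.aestronglyMeasurable
      rw [tube_mean P X hmeas hX a, zero_mul] at h
      exact h
    have I2 : Integrable (fun ω => 2 * (X a ω * ∑ i ∈ s, X i ω)) P := hintXW.const_mul 2
    have I23 : Integrable
        (fun ω => 2 * (X a ω * ∑ i ∈ s, X i ω) + (∑ i ∈ s, X i ω)^2) P := I2.add hintW2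
    rw [integral_add (integrable_const 1) I23, integral_add I2 hintW2, integral_const_mul,
      hIprod, ih, integral_const, Finset.card_insert_of_notMem ha]
    simp
    push_cast
    ring

lemma tube_mom4 (hmeas : ∀ i, Measurable (X i))
    (hindep : iIndepFun X P)
    (hX : ∀ i, P {ω | X i ω = 1} = 1/2 ∧ P {ω | X i ω = -1} = 1/2) (s : Finset ℕ) :
    ∫ ω, (∑ i ∈ s, X i ω)^4 ∂P ≤ 3 * (s.card : ℝ)^2 := by
  classical
  induction s using Finset.induction_on with
  | empty => simp
  | @insert a s ha ih =>
    simp only [Finset.sum_insert ha]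
    have hW := tube_Wmeas X hmeas s
    have habs1 : ∀ᵐ ω ∂P, |X a ω| = 1 := by
      filter_upwards [tube_pm P X hmeas hX a] with ω h
      rcases h with h | h <;> rw [h] <;> norm_num
    have hintXWk : ∀ k : ℕ, Integrable (fun ω => X a ω * (∑ i ∈ s, X i ω)^k) P := by
      intro k
      refine tube_int P ((s.card : ℝ)^k) ((hmeas a).mul (hW.pow_const k)) ?_
      filter_upwards [habs1, tube_Wbd P X hmeas hX s] with ω h1 h2
      rw [abs_mul, h1, one_mul, abs_pow]
      exact pow_le_pow_left₀ (abs_nonneg _) h2 k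
    have hintW2 := tube_intWk P X hmeas hX s 2
    have hintW4 := tube_intWk P X hmeas hX s 4
    have hIprod : ∀ k : ℕ, ∫ ω, X a ω * (∑ i ∈ s, X i ω)^k ∂P = 0 := by
      intro k
      have hik : IndepFun (X a) (fun ω => (∑ i ∈ s, X i ω)^k) P := by
        have h := tube_indep P X hmeas hindep ha
        exact h.comp measurable_id (measurable_id.pow_const k)
      have h := hik.integral_mul_eq_mul_integral (hmeas a).aestronglyMeasurable
        (hW.pow_const k).aestronglyMeasurable
      rw [tube_mean P X hmeas hX a, zero_mul] at h
      exact h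
    have hcongr : ∫ ω, (X a ω + ∑ i ∈ s, X i ω)^4 ∂P
        = ∫ ω, (1 + (4 * (X a ω * (∑ i ∈ s, X i ω)^3) + (6 * (∑ i ∈ s, X i ω)^2 +
          (4 * (X a ω * (∑ i ∈ s, X i ω)) + (∑ i ∈ s, X i ω)^4)))) ∂P := by
      refine integral_congr_ae ?_
      filter_upwards [tube_sq P X hmeas hX a] with ω h
      have h4 : X a ω^4 = 1 := by
        have : X a ω^4 = (X a ω^2)^2 := by ring
        rw [this, h]; norm_num
      have h3 : X a ω^3 = X a ω := by
        have : X a ω^3 = X a ω^2 * X a ω := by ring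
        rw [this, h, one_mul]
      have hexp : (X a ω + ∑ i ∈ s, X i ω)^4
          = X a ω^4 + (4 * (X a ω^3 * (∑ i ∈ s, X i ω)) + (6 * (X a ω^2 * (∑ i ∈ s, X i ω)^2) +
            (4 * (X a ω * (∑ i ∈ s, X i ω)^3) + (∑ i ∈ s, X i ω)^4))) := by ring
      rw [hexp, h4, h3, h]
      ring_nf
    rw [hcongr]
    have hint3 : Integrable (fun ω => X a ω * (∑ i ∈ s, X i ω)^3) P := hintXWk 3
    have hint1 : Integrable (fun ω => X a ω * (∑ i ∈ s, X i ω)^1) P := hintXWk 1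
    simp only [pow_one] at hint1
    have J1 : Integrable (fun ω => 4 * (X a ω * (∑ i ∈ s, X i ω)^3)) P := hint3.const_mul 4
    have J2 : Integrable (fun ω => 6 * (∑ i ∈ s, X i ω)^2) P := hintW2.const_mul 6
    have J3 : Integrable (fun ω => 4 * (X a ω * ∑ i ∈ s, X i ω)) P := hint1.const_mul 4
    have J34 : Integrable (fun ω => 4 * (X a ω * ∑ i ∈ s, X i ω) + (∑ i ∈ s, X i ω)^4) P :=
      J3.add hintW4
    have J234 : Integrable (fun ω => 6 * (∑ i ∈ s, X i ω)^2 +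
        (4 * (X a ω * ∑ i ∈ s, X i ω) + (∑ i ∈ s, X i ω)^4)) P := J2.add J34
    have J1234 : Integrable (fun ω => 4 * (X a ω * (∑ i ∈ s, X i ω)^3) +
        (6 * (∑ i ∈ s, X i ω)^2 + (4 * (X a ω * ∑ i ∈ s, X i ω) + (∑ i ∈ s, X i ω)^4))) P :=
      J1.add J234
    rw [integral_add (integrable_const 1) J1234, integral_add J1 J234, integral_add J2 J34,
      integral_add J3 hintW4, integral_const_mul, integral_const_mul, integral_const_mul]
    have h3' := hIprod 3
    have h1' := hIprod 1
    simp only [pow_one] at h1'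
    rw [h3', h1', tube_mom2 P X hmeas hindep hX s, integral_const]
    simp only [measureReal_def, measure_univ, ENNReal.toReal_one, smul_eq_mul, one_mul, mul_zero, zero_add, add_zero]
    have hcard : ((insert a s).card : ℝ) = (s.card : ℝ) + 1 := by
      rw [Finset.card_insert_of_notMem ha]; push_cast; ring
    rw [hcard]
    nlinarith [ih, Nat.cast_nonneg (α := ℝ) s.card]

lemma tube_block (hmeas : ∀ i, Measurable (X i))
    (hindep : iIndepFun X P)
    (hX : ∀ i, P {ω | X i ω = 1} = 1/2 ∧ P {ω | X i ω = -1} = 1/2) (s : Finset ℕ) (a : ℝ)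
    (hc : 0 < s.card) (ha2 : a^2 ≤ (s.card : ℝ)/4) :
    (P {ω | |∑ i ∈ s, X i ω| ≤ a}).toReal ≤ 23/24 := by
  set W : Ω → ℝ := fun ω => ∑ i ∈ s, X i ω with hWdef
  set c : ℝ := (s.card : ℝ) with hcdef
  have hc0 : (0:ℝ) < c := by rw [hcdef]; exact_mod_cast hc
  have hWm : Measurable W := tube_Wmeas X hmeas s
  set B : Set Ω := {ω | a < |W ω|} with hBdef
  have hBm : MeasurableSet B := measurableSet_lt measurable_const hWm.abs
  have key : ∀ ω, W ω^2 ≤ a^2 + (B.indicator (fun _ => 6*c) ω + W ω^4/(6*c)) := by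
    intro ω
    have hW4 : (0:ℝ) ≤ W ω^4 := by positivity
    have h6c : (0:ℝ) < 6*c := by linarith
    by_cases h1 : ω ∈ B
    · rw [Set.indicator_of_mem h1]
      by_cases h2 : W ω^2 ≤ 6*c
      · have ha0 : (0:ℝ) ≤ a^2 := sq_nonneg a
        have : (0:ℝ) ≤ W ω^4/(6*c) := by positivity
        linarith
      · push_neg at h2
        have hdiv : W ω^2 ≤ W ω^4/(6*c) := by
          rw [le_div_iff₀ h6c]
          nlinarith [sq_nonneg (W ω)]
        have ha0 : (0:ℝ) ≤ a^2 := sq_nonneg a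
        linarith
    · rw [Set.indicator_of_notMem h1]
      have h1' : |W ω| ≤ a := by
        simp only [hBdef, Set.mem_setOf_eq, not_lt] at h1
        exact h1
      have : W ω^2 ≤ a^2 := by
        have := abs_nonneg (W ω)
        nlinarith [sq_abs (W ω)]
      have : (0:ℝ) ≤ W ω^4/(6*c) := by positivity
      linarith
  have hintW2 := tube_intWk P X hmeas hX s 2
  have hintW4 := tube_intWk P X hmeas hX s 4
  have hintInd : Integrable (B.indicator (fun _ => (6*c : ℝ))) P :=
    (integrable_const (6*c)).indicator hBm
  have hintRHS : Integrable (fun ω => a^2 + (B.indicator (fun _ => 6*c) ω + W ω^4/(6*c))) P :=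
    (integrable_const (a^2)).add (hintInd.add (hintW4.div_const _))
  have hmono : ∫ ω, W ω^2 ∂P ≤ ∫ ω, (a^2 + (B.indicator (fun _ => 6*c) ω + W ω^4/(6*c))) ∂P :=
    integral_mono_ae hintW2 hintRHS (ae_of_all _ key)
  have hRHS : ∫ ω, (a^2 + (B.indicator (fun _ => 6*c) ω + W ω^4/(6*c))) ∂P
      = a^2 + ((P B).toReal * (6*c) + (∫ ω, W ω^4 ∂P)/(6*c)) := by
    have K1 : Integrable (fun ω => B.indicator (fun _ => (6*c:ℝ)) ω) P := hintInd
    have K2 : Integrable (fun ω => W ω^4/(6*c)) P := hintW4.div_const _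
    have K12 : Integrable (fun ω => B.indicator (fun _ => (6*c:ℝ)) ω + W ω^4/(6*c)) P :=
      K1.add K2
    rw [integral_add (integrable_const (a^2)) K12, integral_add K1 K2, integral_const,
      integral_div]
    have : ∫ ω, B.indicator (fun _ => (6*c:ℝ)) ω ∂P = (P B).toReal * (6*c) := by
      rw [integral_indicator_const _ hBm]; simp [smul_eq_mul, measureReal_def]
    rw [this]
    simp [smul_eq_mul]
  have hM2 : ∫ ω, W ω^2 ∂P = c := tube_mom2 P X hmeas hindep hX s
  have hM4 : ∫ ω, W ω^4 ∂P ≤ 3*c^2 := tube_mom4 P X hmeas hindep hX s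
  have hPB : (1:ℝ)/24 ≤ (P B).toReal := by
    rw [hM2] at hmono
    rw [hRHS] at hmono
    have h6c : (0:ℝ) < 6*c := by linarith
    have hdiv : (∫ ω, W ω^4 ∂P)/(6*c) ≤ (3*c^2)/(6*c) := by
      gcongr
    have heq : (3*c^2)/(6*c) = c/2 := by field_simp; ring
    rw [heq] at hdiv
    nlinarith [hmono, hdiv, ha2, hc0]
  have hcomp : {ω | |W ω| ≤ a} = Bᶜ := by
    ext ω; simp [hBdef, not_lt]
  have hsplit : (P B).toReal + (P Bᶜ).toReal = 1 := by
    rw [← ENNReal.toReal_add (measure_ne_top _ _) (measure_ne_top _ _),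
      measure_add_measure_compl hBm]
    simp
  rw [hcomp]
  linarith

lemma tube_blocks (hmeas : ∀ i, Measurable (X i))
    (hindep : iIndepFun X P)
    (ℓ : ℕ) (a : ℝ)
    (hA : ∀ j : ℕ, (P {ω | |∑ i ∈ Finset.Ico (j*ℓ) (j*ℓ+ℓ), X i ω| ≤ a}).toReal ≤ 23/24)
    (N : ℕ) :
    (P (⋂ j ∈ Finset.range N, {ω | |∑ i ∈ Finset.Ico (j*ℓ) (j*ℓ+ℓ), X i ω| ≤ a})).toReal
      ≤ (23/24)^N := by
  induction N with
  | zero => simp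
  | succ N ih =>
    rw [Finset.range_add_one]
    have hbi : (⋂ j ∈ insert N (Finset.range N),
        {ω | |∑ i ∈ Finset.Ico (j*ℓ) (j*ℓ+ℓ), X i ω| ≤ a})
        = {ω | |∑ i ∈ Finset.Ico (N*ℓ) (N*ℓ+ℓ), X i ω| ≤ a} ∩
          (⋂ j ∈ Finset.range N, {ω | |∑ i ∈ Finset.Ico (j*ℓ) (j*ℓ+ℓ), X i ω| ≤ a}) := by
      simp [Set.biInter_insert]
    rw [hbi]
    set T : Finset ℕ := Finset.range (N*ℓ) with hTdef
    set Sb : Finset ℕ := Finset.Ico (N*ℓ) (N*ℓ+ℓ) with hSdef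
    have hd : Disjoint Sb T := by
      rw [Finset.disjoint_left]
      intro i hi hi'
      rw [hSdef, Finset.mem_Ico] at hi
      rw [hTdef, Finset.mem_range] at hi'
      omega
    have hIF := hindep.indepFun_finset Sb T hd hmeas
    set MA : Set ((i : Sb) → ℝ) := {v | |∑ i ∈ Sb.attach, v i| ≤ a} with hMAdef
    have hMAm : MeasurableSet MA := by
      have hsum : Measurable (fun v : (i : Sb) → ℝ => |∑ i ∈ Sb.attach, v i|) :=
        (Finset.measurable_sum Sb.attach (fun i _ => measurable_pi_apply i)).abs
      exact measurableSet_le hsum measurable_const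
    set ME : Set ((i : T) → ℝ) :=
      ⋂ j ∈ Finset.range N,
        {v : (i : T) → ℝ |
          |∑ i ∈ T.attach, (if (i:ℕ) ∈ Finset.Ico (j*ℓ) (j*ℓ+ℓ) then v i else 0)| ≤ a}
      with hMEdef
    have hMEm : MeasurableSet ME := by
      refine MeasurableSet.biInter (Finset.range N).countable_toSet (fun j _ => ?_)
      have hsum : Measurable (fun v : (i : T) → ℝ =>
          |∑ i ∈ T.attach, (if (i:ℕ) ∈ Finset.Ico (j*ℓ) (j*ℓ+ℓ) then v i else 0)|) := by
        refine Measurable.abs ?_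
        refine Finset.measurable_sum T.attach (fun i _ => ?_)
        by_cases h : (i:ℕ) ∈ Finset.Ico (j*ℓ) (j*ℓ+ℓ)
        · simp only [h, if_true]; exact measurable_pi_apply i
        · simp only [h, if_false]; exact measurable_const
      exact measurableSet_le hsum measurable_const
    have hGA : (fun ω (i : Sb) => X i ω) ⁻¹' MA
        = {ω | |∑ i ∈ Finset.Ico (N*ℓ) (N*ℓ+ℓ), X i ω| ≤ a} := by
      ext ω
      simp only [Set.mem_preimage, hMAdef, Set.mem_setOf_eq]
      rw [Finset.sum_attach Sb (fun i => X i ω)]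
    have hFE : (fun ω (i : T) => X i ω) ⁻¹' ME
        = ⋂ j ∈ Finset.range N, {ω | |∑ i ∈ Finset.Ico (j*ℓ) (j*ℓ+ℓ), X i ω| ≤ a} := by
      ext ω
      simp only [Set.mem_preimage, hMEdef, Set.mem_iInter, Set.mem_setOf_eq]
      refine forall_congr' (fun j => forall_congr' (fun hj => ?_))
      rw [Finset.sum_attach T (fun i => if i ∈ Finset.Ico (j*ℓ) (j*ℓ+ℓ) then X i ω else 0)]
      rw [Finset.sum_ite_mem T (Finset.Ico (j*ℓ) (j*ℓ+ℓ)) (fun i => X i ω)]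
      have hsub : T ∩ Finset.Ico (j*ℓ) (j*ℓ+ℓ) = Finset.Ico (j*ℓ) (j*ℓ+ℓ) := by
        refine Finset.inter_eq_right.2 (fun i hi => ?_)
        rw [Finset.mem_Ico] at hi
        rw [hTdef, Finset.mem_range]
        rw [Finset.mem_range] at hj
        have : j*ℓ+ℓ = (j+1)*ℓ := by ring
        have hjN : (j+1) ≤ N := hj
        calc i < j*ℓ+ℓ := hi.2
          _ = (j+1)*ℓ := by ring
          _ ≤ N*ℓ := Nat.mul_le_mul_right ℓ hjN
      rw [hsub]
    have hmul := hIF.measure_inter_preimage_eq_mul MA ME hMAm hMEm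
    rw [hGA, hFE] at hmul
    rw [hmul, ENNReal.toReal_mul, pow_succ']
    have h1 : (P {ω | |∑ i ∈ Finset.Ico (N*ℓ) (N*ℓ+ℓ), X i ω| ≤ a}).toReal ≤ 23/24 := hA N
    have h2 := ih
    have hnn : (0:ℝ) ≤ (P {ω | |∑ i ∈ Finset.Ico (N*ℓ) (N*ℓ+ℓ), X i ω| ≤ a}).toReal :=
      ENNReal.toReal_nonneg
    have hnn2 : (0:ℝ) ≤ (P (⋂ j ∈ Finset.range N,
        {ω | |∑ i ∈ Finset.Ico (j*ℓ) (j*ℓ+ℓ), X i ω| ≤ a})).toReal := ENNReal.toReal_nonneg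
    exact mul_le_mul h1 h2 hnn2 (by norm_num)

end Aux

/-- **Tube estimate for the simple random walk**: with `m n = n^{1/3} (ln n)^{2/3} / ln 2`,
there are constants `C ≥ 1` and `c ∈ (0,1]` such that for all `n ≥ 2`,
`P(∀ k ∈ [1, 2n], |S_k| ≤ m_n / ln n) ≤ C exp(-c n^{1/3} (ln n)^{2/3})`. -/
theorem tube_estimate_random_walk
    {Ω : Type*} [MeasurableSpace Ω] (P : Measure Ω) [IsProbabilityMeasure P]
    (X : ℕ → Ω → ℝ)
    (hmeas : ∀ i, Measurable (X i))
    (hindep : iIndepFun X P)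
    (hX : ∀ i, P {ω | X i ω = 1} = 1/2 ∧ P {ω | X i ω = -1} = 1/2)
    (S : ℕ → Ω → ℝ) (hS : ∀ k ω, S k ω = ∑ i ∈ Finset.range k, X i ω)
    (m : ℕ → ℝ) (hm : ∀ n, m n = (n : ℝ) ^ ((1:ℝ)/3) * (Real.log n) ^ ((2:ℝ)/3) / Real.log 2) :
    ∃ C c : ℝ, 1 ≤ C ∧ 0 < c ∧ c ≤ 1 ∧ ∀ n : ℕ, 2 ≤ n →
      (P {ω | ∀ k : ℕ, 1 ≤ k → k ≤ 2*n → |S k ω| ≤ m n / Real.log n}).toReal ≤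
        C * Real.exp (-(c * (n : ℝ) ^ ((1:ℝ)/3) * (Real.log n) ^ ((2:ℝ)/3))) := by
  classical
  have hlog2 : 0 < Real.log 2 := Real.log_pos (by norm_num)
  have hlog2le : Real.log 2 ≤ 1 := by
    have := Real.log_le_sub_one_of_pos (by norm_num : (0:ℝ) < 2)
    linarith
  refine ⟨Real.exp (1/24), (Real.log 2)^2/204, Real.one_le_exp (by norm_num),
    by positivity, by nlinarith, ?_⟩
  intro n hn
  have hn1 : (1:ℝ) < (n:ℝ) := by exact_mod_cast Nat.lt_of_lt_of_le one_lt_two hn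
  have hnpos : (0:ℝ) < (n:ℝ) := by linarith
  have hln : 0 < Real.log n := Real.log_pos hn1
  set g : ℝ := (n:ℝ) ^ ((1:ℝ)/3) * (Real.log n) ^ ((2:ℝ)/3) with hgdef
  have hrp1 : (0:ℝ) < (n:ℝ) ^ ((1:ℝ)/3) := Real.rpow_pos_of_pos hnpos _
  have hrp2 : (0:ℝ) < (Real.log n) ^ ((2:ℝ)/3) := Real.rpow_pos_of_pos hln _
  have hg : 0 < g := mul_pos hrp1 hrp2
  set L : ℝ := m n / Real.log n with hLdef
  have hLg : L = g / (Real.log 2 * Real.log n) := by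
    rw [hLdef, hm n, hgdef, div_div]
  have hg3 : g^(3:ℕ) = (n:ℝ) * (Real.log n)^(2:ℕ) := by
    rw [hgdef, mul_pow, ← Real.rpow_natCast ((n:ℝ) ^ ((1:ℝ)/3)) 3,
      ← Real.rpow_natCast ((Real.log n) ^ ((2:ℝ)/3)) 3,
      ← Real.rpow_mul hnpos.le, ← Real.rpow_mul hln.le]
    norm_num
  have hL1 : 1 ≤ L := by
    rw [hLg, le_div_iff₀ (by positivity)]
    -- need log2 * log n ≤ g, i.e. log2 * (log n)^{1/3} ≤ n^{1/3}
    have hsplit' : (Real.log n) ^ ((1:ℝ)/3) * (Real.log n) ^ ((2:ℝ)/3) = Real.log n := by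
      rw [← Real.rpow_add hln]
      norm_num
    have hstep : Real.log 2 * (Real.log n) ^ ((1:ℝ)/3) ≤ (n:ℝ) ^ ((1:ℝ)/3) := by
      have h1 : (Real.log n) ^ ((1:ℝ)/3) ≤ (n:ℝ) ^ ((1:ℝ)/3) := by
        apply Real.rpow_le_rpow hln.le _ (by norm_num)
        have := Real.log_le_sub_one_of_pos hnpos
        linarith
      have h2 : Real.log 2 * (Real.log n) ^ ((1:ℝ)/3) ≤ (Real.log n) ^ ((1:ℝ)/3) := by
        nlinarith [Real.rpow_pos_of_pos hln ((1:ℝ)/3)]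
      linarith
    calc 1 * (Real.log 2 * Real.log n) = Real.log 2 * Real.log n := by ring
      _ = (Real.log 2 * (Real.log n) ^ ((1:ℝ)/3)) * (Real.log n) ^ ((2:ℝ)/3) := by
          rw [mul_assoc, hsplit']
      _ ≤ (n:ℝ) ^ ((1:ℝ)/3) * (Real.log n) ^ ((2:ℝ)/3) := by
          apply mul_le_mul_of_nonneg_right hstep hrp2.le
      _ = g := hgdef.symm
  have hLpos : 0 < L := by linarith
  set ℓ : ℕ := ⌈(16:ℝ)*L^2⌉₊ with hldef
  have hℓlb : (16:ℝ)*L^2 ≤ (ℓ:ℕ) := Nat.le_ceil _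
  have hℓpos : 0 < ℓ := Nat.ceil_pos.2 (by positivity)
  have hℓub : (ℓ:ℝ) ≤ 17*L^2 := by
    have h1 : (ℓ:ℝ) < 16*L^2 + 1 := Nat.ceil_lt_add_one (by positivity)
    nlinarith
  set N : ℕ := (2*n)/ℓ with hNdef
  have hblock : ∀ j : ℕ,
      (P {ω | |∑ i ∈ Finset.Ico (j*ℓ) (j*ℓ+ℓ), X i ω| ≤ 2*L}).toReal ≤ 23/24 := by
    intro j
    have hcard : (Finset.Ico (j*ℓ) (j*ℓ+ℓ)).card = ℓ := by
      rw [Nat.card_Ico]; omega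
    refine tube_block P X hmeas hindep hX _ (2*L) (by rw [hcard]; exact hℓpos) ?_
    rw [hcard]
    nlinarith
  have hprod := tube_blocks P X hmeas hindep ℓ (2*L) hblock N
  have hincl : {ω | ∀ k : ℕ, 1 ≤ k → k ≤ 2*n → |S k ω| ≤ m n / Real.log n}
      ⊆ ⋂ j ∈ Finset.range N, {ω | |∑ i ∈ Finset.Ico (j*ℓ) (j*ℓ+ℓ), X i ω| ≤ 2*L} := by
    intro ω hω
    simp only [Set.mem_iInter, Set.mem_setOf_eq]
    intro j hj
    rw [Finset.mem_range] at hj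
    have hSabs : ∀ t : ℕ, t ≤ 2*n → |S t ω| ≤ L := by
      intro t ht
      rcases Nat.eq_zero_or_pos t with h0 | h1
      · rw [h0, hS 0 ω]
        simp only [Finset.range_zero, Finset.sum_empty, abs_zero]
        linarith
      · exact hω t h1 ht
    have hle1 : j*ℓ+ℓ ≤ 2*n := by
      have h1 : (j+1)*ℓ ≤ N*ℓ := Nat.mul_le_mul_right ℓ hj
      have h2 : N*ℓ ≤ 2*n := Nat.div_mul_le_self _ _
      calc j*ℓ+ℓ = (j+1)*ℓ := by ring
        _ ≤ N*ℓ := h1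
        _ ≤ 2*n := h2
    have hle0 : j*ℓ ≤ 2*n := by omega
    have hsum : ∑ i ∈ Finset.Ico (j*ℓ) (j*ℓ+ℓ), X i ω = S (j*ℓ+ℓ) ω - S (j*ℓ) ω := by
      rw [hS, hS]
      rw [Finset.sum_Ico_eq_sub (fun i => X i ω) (Nat.le_add_right _ _)]
    rw [hsum]
    calc |S (j*ℓ+ℓ) ω - S (j*ℓ) ω| ≤ |S (j*ℓ+ℓ) ω| + |S (j*ℓ) ω| := abs_sub _ _
      _ ≤ L + L := add_le_add (hSabs _ hle1) (hSabs _ hle0)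
      _ = 2*L := by ring
  have hPE : (P {ω | ∀ k : ℕ, 1 ≤ k → k ≤ 2*n → |S k ω| ≤ m n / Real.log n}).toReal
      ≤ (P (⋂ j ∈ Finset.range N,
        {ω | |∑ i ∈ Finset.Ico (j*ℓ) (j*ℓ+ℓ), X i ω| ≤ 2*L})).toReal :=
    ENNReal.toReal_mono (measure_ne_top _ _) (measure_mono hincl)
  have h2324 : (23/24 : ℝ) ≤ Real.exp (-(1/24)) := by
    have := Real.add_one_le_exp (-(1/24 : ℝ)); linarith
  have hexpN : ((23:ℝ)/24)^N ≤ Real.exp (-((N:ℝ)/24)) := by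
    calc ((23:ℝ)/24)^N ≤ (Real.exp (-(1/24)))^N := pow_le_pow_left₀ (by norm_num) h2324 N
      _ = Real.exp ((N:ℝ) * (-(1/24))) := (Real.exp_nat_mul _ N).symm
      _ = Real.exp (-((N:ℝ)/24)) := by ring_nf
  have hℓR : (0:ℝ) < (ℓ:ℝ) := by exact_mod_cast hℓpos
  have hNge : (2*(n:ℝ))/(ℓ:ℝ) - 1 ≤ (N:ℝ) := by
    have hmod := Nat.div_add_mod (2*n) ℓ
    have hmodlt : (2*n) % ℓ < ℓ := Nat.mod_lt _ hℓpos
    have hnat : 2*n < ℓ*(N+1) := by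
      calc 2*n = ℓ*N + (2*n)%ℓ := by rw [hNdef]; omega
        _ < ℓ*N + ℓ := by omega
        _ = ℓ*(N+1) := by ring
    have hR : (2*(n:ℝ)) < (ℓ:ℝ)*((N:ℝ)+1) := by exact_mod_cast hnat
    have h2 : (2*(n:ℝ))/(ℓ:ℝ) < (N:ℝ)+1 := (div_lt_iff₀ hℓR).2 (by linarith)
    linarith
  have hg3' : ((n:ℝ) ^ ((1:ℝ)/3))^(3:ℕ) * ((Real.log n) ^ ((2:ℝ)/3))^(3:ℕ)
      = (n:ℝ) * (Real.log n)^(2:ℕ) := by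
    rw [← mul_pow]; exact hg3
  have hgL2 : g * L^2 * (Real.log 2)^2 = (n:ℝ) := by
    rw [hLg, div_pow, mul_pow]
    field_simp
    linear_combination hg3'
  have hfrac : (2*(Real.log 2)^2/17) * g ≤ (2*(n:ℝ))/(ℓ:ℝ) := by
    have h1 : (2*(Real.log 2)^2/17) * g = (2*(n:ℝ))/(17*L^2) := by
      rw [← hgL2]; field_simp
    rw [h1]
    apply div_le_div_of_nonneg_left (by positivity) hℓR hℓub
  -- final chain
  have hchain : (P {ω | ∀ k : ℕ, 1 ≤ k → k ≤ 2*n → |S k ω| ≤ m n / Real.log n}).toReal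
      ≤ Real.exp (1/24) * Real.exp (-((Real.log 2)^2/204 * g)) := by
    calc (P {ω | ∀ k : ℕ, 1 ≤ k → k ≤ 2*n → |S k ω| ≤ m n / Real.log n}).toReal
        ≤ ((23:ℝ)/24)^N := le_trans hPE hprod
      _ ≤ Real.exp (-((N:ℝ)/24)) := hexpN
      _ ≤ Real.exp (1/24 - (2*(n:ℝ))/(ℓ:ℝ)/24) := by
          apply Real.exp_le_exp.2
          linarith
      _ ≤ Real.exp (1/24 - (2*(Real.log 2)^2/17) * g/24) := by
          apply Real.exp_le_exp.2
          linarith [hfrac]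
      _ = Real.exp (1/24) * Real.exp (-((Real.log 2)^2/204 * g)) := by
          rw [← Real.exp_add]
          congr 1
          ring
  calc (P {ω | ∀ k : ℕ, 1 ≤ k → k ≤ 2*n → |S k ω| ≤ m n / Real.log n}).toReal
      ≤ Real.exp (1/24) * Real.exp (-((Real.log 2)^2/204 * g)) := hchain
    _ = Real.exp (1/24) * Real.exp (-((Real.log 2)^2/204 * (n:ℝ) ^ ((1:ℝ)/3) *
        (Real.log n) ^ ((2:ℝ)/3))) := by
        congr 2
        rw [hgdef]; ring
end

section
/- For all integers n ≥ 2 and all integers k with 1 ≤ k ≤ n − 1, one has 2^{−2n+k} · C(2n−k, n) ≤ (e / (π √(2n))) · (√(n − k/2) / √(n − k)) · exp((2n−k) ln(1 − k/(2n)) − (n−k) ln(1 − k/n)), where C(m, j) denotes the binomial coefficient. -/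
open Real Filter


private lemma stirling_lb (m : ℕ) (hm : 1 ≤ m) :
    √π * (√(2 * m : ℝ) * ((m : ℝ) / exp 1) ^ m) ≤ (Nat.factorial m : ℝ) := by
  have ht : Tendsto (Stirling.stirlingSeq ∘ Nat.succ) atTop (nhds (√π)) :=
    Stirling.tendsto_stirlingSeq_sqrt_pi.comp (tendsto_add_atTop_nat 1)
  obtain ⟨j, rfl⟩ := Nat.exists_eq_add_of_le hm
  have h1 : √π ≤ Stirling.stirlingSeq (1 + j) := by
    rw [add_comm]
    exact Stirling.stirlingSeq'_antitone.le_of_tendsto ht j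
  have hD : 0 < √(2 * (1 + j : ℕ) : ℝ) * (((1 + j : ℕ) : ℝ) / exp 1) ^ (1 + j) := by
    positivity
  rw [Stirling.stirlingSeq, le_div_iff₀ hD] at h1
  linarith

private lemma stirling_ub (m : ℕ) (hm : 1 ≤ m) :
    (Nat.factorial m : ℝ) ≤ (exp 1 / √2) * (√(2 * m : ℝ) * ((m : ℝ) / exp 1) ^ m) := by
  obtain ⟨j, rfl⟩ := Nat.exists_eq_add_of_le hm
  have h1 : Stirling.stirlingSeq (1 + j) ≤ exp 1 / √2 := by
    rw [add_comm, ← Stirling.stirlingSeq_one]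
    exact Stirling.stirlingSeq'_antitone (Nat.zero_le j)
  have hD : 0 < √(2 * (1 + j : ℕ) : ℝ) * (((1 + j : ℕ) : ℝ) / exp 1) ^ (1 + j) := by
    positivity
  rw [Stirling.stirlingSeq, div_le_iff₀ hD] at h1
  linarith

/-- For `n ≥ 2` and `1 ≤ k ≤ n-1`,
`2^{-2n+k} C(2n-k, n) ≤ (e/(π √(2n))) (√(n-k/2)/√(n-k))
  exp((2n-k) ln(1-k/(2n)) - (n-k) ln(1-k/n))`. -/
theorem local_time_probability_stirling_bound
    (n k : ℕ) (hn : 2 ≤ n) (hk1 : 1 ≤ k) (hkn : k ≤ n - 1) :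
    (2 : ℝ) ^ ((k : ℤ) - 2 * n) * (Nat.choose (2 * n - k) n : ℝ) ≤
      (Real.exp 1 / (π * Real.sqrt (2 * n))) *
        (Real.sqrt ((n : ℝ) - k / 2) / Real.sqrt ((n : ℝ) - k)) *
        Real.exp ((2 * (n : ℝ) - k) * Real.log (1 - (k : ℝ) / (2 * n)) -
          ((n : ℝ) - k) * Real.log (1 - (k : ℝ) / n)) := by
  have hkn' : k < n := by omega
  set a := 2 * n - k with ha_def
  set c := n - k with hc_def
  have hc1 : 1 ≤ c := by omega
  have ha1 : 1 ≤ a := by omega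
  have hna : n ≤ a := by omega
  have hanc : a = n + c := by omega
  have haR : (a : ℝ) = 2 * (n : ℝ) - k := by
    rw [ha_def, Nat.cast_sub (by omega)]; push_cast; ring
  have hcR : (c : ℝ) = (n : ℝ) - k := by
    rw [hc_def, Nat.cast_sub (by omega)]
  -- positivity facts
  have hN : (0:ℝ) < n := by
    have : 0 < n := by omega
    exact_mod_cast this
  have hK : (0:ℝ) < k := by exact_mod_cast hk1
  have hC : (0:ℝ) < (n:ℝ) - k := by
    have : (k:ℝ) < n := by exact_mod_cast hkn'
    linarith
  have hA : (0:ℝ) < 2 * (n:ℝ) - k := by linarith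
  have hH : (0:ℝ) < (n:ℝ) - k / 2 := by linarith
  have he : (0:ℝ) < exp 1 := Real.exp_pos 1
  have haa : (0:ℝ) < a := by rw [haR]; linarith
  have hcc : (0:ℝ) < c := by rw [hcR]; linarith
  -- the choose identity
  have hchoose : (Nat.choose a n : ℝ) =
      (Nat.factorial a : ℝ) / ((Nat.factorial n : ℝ) * (Nat.factorial c : ℝ)) := by
    have h := Nat.choose_mul_factorial_mul_factorial hna
    have hac : a - n = c := by omega
    rw [hac] at h
    have hpos : (0:ℝ) < (Nat.factorial n : ℝ) * (Nat.factorial c : ℝ) := by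
      have := Nat.mul_pos n.factorial_pos c.factorial_pos
      exact_mod_cast this
    rw [eq_div_iff hpos.ne']
    exact_mod_cast (by rw [← h]; ring :
      (Nat.choose a n * (Nat.factorial n * Nat.factorial c) : ℕ) = Nat.factorial a)
  -- Stirling bound on choose
  set Sa : ℝ := √(2 * a : ℝ) * ((a : ℝ) / exp 1) ^ a with hSa
  set Sn : ℝ := √(2 * n : ℝ) * ((n : ℝ) / exp 1) ^ n with hSn
  set Sc : ℝ := √(2 * c : ℝ) * ((c : ℝ) / exp 1) ^ c with hSc
  have hSapos : 0 < Sa := by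
    rw [hSa]
    exact mul_pos (Real.sqrt_pos.mpr (by linarith)) (pow_pos (div_pos haa he) a)
  have hSnpos : 0 < Sn := by rw [hSn]; positivity
  have hScpos : 0 < Sc := by
    rw [hSc]
    exact mul_pos (Real.sqrt_pos.mpr (by linarith)) (pow_pos (div_pos hcc he) c)
  have hbound : (Nat.choose a n : ℝ) ≤
      (exp 1 / √2 * Sa) / (√π * Sn * (√π * Sc)) := by
    rw [hchoose]
    apply div_le_div₀ (by positivity) (stirling_ub a ha1)
    · positivity
    · exact mul_le_mul (stirling_lb n (by omega)) (stirling_lb c hc1)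
        (by positivity) (Nat.cast_nonneg _)
  -- the exp term as powers
  have hexp : Real.exp ((2 * (n : ℝ) - k) * Real.log (1 - (k : ℝ) / (2 * n)) -
          ((n : ℝ) - k) * Real.log (1 - (k : ℝ) / n)) =
      ((2 * (n:ℝ) - k) / (2 * n)) ^ a / (((n:ℝ) - k) / n) ^ c := by
    rw [show (1 - (k : ℝ) / (2 * n)) = (2 * (n:ℝ) - k) / (2 * n) by field_simp,
      show (1 - (k : ℝ) / n) = ((n:ℝ) - k) / n by field_simp,
      ← haR, ← hcR, ← Real.log_pow, ← Real.log_pow, Real.exp_sub,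
      Real.exp_log (by positivity), Real.exp_log (by positivity)]
  have hzpow : (2:ℝ) ^ ((k : ℤ) - 2 * n) = ((2:ℝ) ^ a)⁻¹ := by
    rw [show (k : ℤ) - 2 * n = -(a : ℤ) by omega, zpow_neg, zpow_natCast]
  have hra : rexp (a:ℝ) = rexp n * rexp c := by
    have hac' : (a:ℝ) = (n:ℝ) + c := by exact_mod_cast hanc
    rw [hac', Real.exp_add]
  calc (2 : ℝ) ^ ((k : ℤ) - 2 * n) * (Nat.choose a n : ℝ)
      ≤ (2 : ℝ) ^ ((k : ℤ) - 2 * n) * ((exp 1 / √2 * Sa) / (√π * Sn * (√π * Sc))) := by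
        apply mul_le_mul_of_nonneg_left hbound (by positivity)
    _ = (Real.exp 1 / (π * Real.sqrt (2 * n))) *
        (Real.sqrt ((n : ℝ) - k / 2) / Real.sqrt ((n : ℝ) - k)) *
        Real.exp ((2 * (n : ℝ) - k) * Real.log (1 - (k : ℝ) / (2 * n)) -
          ((n : ℝ) - k) * Real.log (1 - (k : ℝ) / n)) := by
        rw [hexp, hzpow, hSa, hSn, hSc]
        have h2a : √(2 * a : ℝ) = 2 * √((n:ℝ) - k / 2) := by
          rw [show (2 * a : ℝ) = 2^2 * ((n:ℝ) - k/2) by rw [haR]; ring,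
            Real.sqrt_mul (by positivity), Real.sqrt_sq (by norm_num)]
        have h2c : √(2 * c : ℝ) = √2 * √((n:ℝ) - k) := by
          rw [show (2 * c : ℝ) = 2 * ((n:ℝ) - k) by rw [hcR], Real.sqrt_mul (by norm_num)]
        rw [h2a, h2c, haR, hcR]
        have hsq2 : (√2 : ℝ) * √2 = 2 := Real.mul_self_sqrt (by norm_num)
        have hsqpi : (√π : ℝ) * √π = π := Real.mul_self_sqrt pi_pos.le
        have hsp : (0:ℝ) < √π := Real.sqrt_pos.mpr pi_pos
        have hs2 : (0:ℝ) < √2 := by positivity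
        have hsn : (0:ℝ) < √(2 * (n:ℝ)) := by positivity
        have hsC : (0:ℝ) < √((n:ℝ) - k) := Real.sqrt_pos.mpr hC
        have hsH : (0:ℝ) < √((n:ℝ) - k/2) := Real.sqrt_pos.mpr hH
        rw [div_pow, div_pow, div_pow, div_pow]
        field_simp
        rw [Real.sq_sqrt (by norm_num : (0:ℝ) ≤ 2), Real.sq_sqrt pi_pos.le, hanc, div_pow]
        field_simp
        ring
end

section
/- For every η ∈ (0,1) there exist a constant C > 0 and N ∈ ℕ such that for all n ≥ N and all integers k with 1 ≤ k ≤ n^{1−η}, one has 2^{−2n+k} · C(2n−k, n) ≤ (C / √n) · exp(−k² / (5n)), where C(m, j) denotes the binomial coefficient. -/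
open Real

lemma cb_sq_bound (n : ℕ) : Nat.centralBinom n ^ 2 * (2 * n + 1) ≤ 16 ^ n := by
  induction n with
  | zero => simp [Nat.centralBinom]
  | succ n ih =>
    have key := Nat.succ_mul_centralBinom_succ n
    have h2 : ((n+1) * Nat.centralBinom (n+1))^2 * (2*(n+1)+1) ≤ (n+1)^2 * 16^(n+1) := by
      rw [key]
      calc (2*(2*n+1) * Nat.centralBinom n)^2 * (2*(n+1)+1)
          = (4*(2*n+1)*(2*n+3)) * (Nat.centralBinom n ^2 * (2*n+1)) := by ring
        _ ≤ (4*(2*n+1)*(2*n+3)) * 16^n := Nat.mul_le_mul_left _ ih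
        _ ≤ (16*(n+1)^2) * 16^n := Nat.mul_le_mul_right _ (by nlinarith)
        _ = (n+1)^2 * 16^(n+1) := by ring
    have h3 : ((n+1) * Nat.centralBinom (n+1))^2 * (2*(n+1)+1)
        = (n+1)^2 * (Nat.centralBinom (n+1)^2 * (2*(n+1)+1)) := by ring
    rw [h3] at h2
    exact Nat.le_of_mul_le_mul_left h2 (by positivity)

lemma cb_real_bound (n : ℕ) (hn : 1 ≤ n) :
    (Nat.centralBinom n : ℝ) * Real.sqrt n ≤ 4 ^ n := by
  have h := cb_sq_bound n
  have h' : (Nat.centralBinom n : ℝ)^2 * n ≤ 16 ^ n := by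
    have : (Nat.centralBinom n : ℝ)^2 * (2*n+1) ≤ 16 ^ n := by exact_mod_cast h
    nlinarith [sq_nonneg ((Nat.centralBinom n : ℝ)), (show (1:ℝ) ≤ n by exact_mod_cast hn)]
  have hsq : ((Nat.centralBinom n : ℝ) * Real.sqrt n)^2 ≤ ((4:ℝ)^n)^2 := by
    rw [mul_pow, Real.sq_sqrt (by positivity)]
    calc (Nat.centralBinom n : ℝ)^2 * n ≤ 16 ^ n := h'
      _ = ((4:ℝ)^n)^2 := by rw [← pow_mul, mul_comm, pow_mul]; norm_num
  have h0 : (0:ℝ) ≤ (Nat.centralBinom n : ℝ) * Real.sqrt n := by positivity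
  have := Real.sqrt_le_sqrt hsq
  rwa [Real.sqrt_sq h0, Real.sqrt_sq (by positivity)] at this

lemma choose_ratio_nat (n k : ℕ) (hk : k + 1 ≤ n) :
    (2*n - k) * Nat.choose (2*n - (k+1)) n = Nat.choose (2*n - k) n * (n - k) := by
  set a := 2*n - k with ha
  set j := n - k with hj
  have ha1 : 1 ≤ a := by omega
  have hj1 : 1 ≤ j := by omega
  have key := Nat.add_one_mul_choose_eq (a-1) (j-1)
  have e1 : a - 1 + 1 = a := by omega
  have e2 : j - 1 + 1 = j := by omega
  rw [e1, e2] at key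
  -- key : a * (a-1).choose (j-1) = a.choose j * j
  have s1 : (a-1).choose (j-1) = (a-1).choose n := by
    have h := Nat.choose_symm (show j - 1 ≤ a - 1 by omega)
    rw [show a - 1 - (j-1) = n by omega] at h
    exact h.symm
  have s2 : a.choose j = a.choose n := by
    have h := Nat.choose_symm (show n ≤ a by omega)
    rw [show a - n = j by omega] at h
    exact h
  rw [s1, s2] at key
  have e3 : 2*n - (k+1) = a - 1 := by omega
  rw [e3, key, hj, mul_comm]

lemma choose_exp_bound (n : ℕ) (hn : 1 ≤ n) :
    ∀ k : ℕ, k ≤ n → (Nat.choose (2*n - k) n : ℝ) * 2^k ≤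
      (Nat.centralBinom n : ℝ) * Real.exp (-((k:ℝ) * ((k:ℝ)-1))/(4*n)) := by
  intro k
  induction k with
  | zero =>
    intro _
    simp [Nat.centralBinom]
  | succ k ih =>
    intro hk1
    have hk : k ≤ n := by omega
    have ihk := ih hk
    have hnr : (0:ℝ) < n := by exact_mod_cast hn
    have hid := choose_ratio_nat n k hk1
    have hapos : (0:ℝ) < 2*(n:ℝ) - (k:ℝ) := by
      have : (k:ℝ) < 2*n := by exact_mod_cast (show k < 2*n by omega)
      linarith
    -- real identity
    have hidR : (Nat.choose (2*n - (k+1)) n : ℝ)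
        = (Nat.choose (2*n - k) n : ℝ) * ((n:ℝ) - k) / ((2*n:ℝ) - k) := by
      have : ((2*n - k : ℕ):ℝ) * (Nat.choose (2*n - (k+1)) n : ℝ)
          = (Nat.choose (2*n - k) n : ℝ) * ((n - k : ℕ):ℝ) := by exact_mod_cast hid
      rw [Nat.cast_sub (by omega), Nat.cast_sub hk] at this
      push_cast at this ⊢
      have hne : (2*(n:ℝ) - k) ≠ 0 := by linarith
      rw [eq_div_iff hne]
      linarith [this]
    have hknR : (k:ℝ) ≤ n := by exact_mod_cast hk
    have h2n : (0:ℝ) < 2*(n:ℝ) := by linarith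
    have hratio : 2 * (((n:ℝ) - k) / ((2*n:ℝ) - k)) ≤ Real.exp (-(k:ℝ)/(2*n)) := by
      have h1 : 2 * (((n:ℝ) - k) / ((2*n:ℝ) - k)) ≤ 1 - (k:ℝ)/(2*n) := by
        have he : 1 - (k:ℝ)/(2*(n:ℝ)) = (2*(n:ℝ) - k)/(2*(n:ℝ)) := by
          field_simp
        rw [he, ← mul_div_assoc, div_le_div_iff₀ hapos h2n]
        nlinarith [sq_nonneg (k:ℝ)]
      have h2 : 1 - (k:ℝ)/(2*n) ≤ Real.exp (-(k:ℝ)/(2*n)) := by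
        rw [neg_div]
        have := Real.add_one_le_exp (-((k:ℝ)/(2*n)))
        linarith
      linarith
    have hrat_nonneg : (0:ℝ) ≤ 2 * (((n:ℝ) - k) / ((2*n:ℝ) - k)) :=
      mul_nonneg (by norm_num) (div_nonneg (by linarith) (by linarith))
    calc (Nat.choose (2*n - (k+1)) n : ℝ) * 2^(k+1)
        = ((Nat.choose (2*n - k) n : ℝ) * 2^k) * (2 * (((n:ℝ) - k) / ((2*n:ℝ) - k))) := by
          rw [hidR]; ring
      _ ≤ ((Nat.centralBinom n : ℝ) * Real.exp (-((k:ℝ) * ((k:ℝ)-1))/(4*n))) * Real.exp (-(k:ℝ)/(2*n)) := by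
          exact mul_le_mul ihk hratio hrat_nonneg (by positivity)
      _ = (Nat.centralBinom n : ℝ) * Real.exp (-(((k:ℕ)+1:ℝ) * (((k:ℕ)+1:ℝ)-1))/(4*n)) := by
          rw [mul_assoc, ← Real.exp_add]
          congr 1
          field_simp
          ring
      _ = (Nat.centralBinom n : ℝ) * Real.exp (-((((k+1:ℕ)):ℝ) * ((((k+1:ℕ)):ℝ)-1))/(4*n)) := by
          push_cast; ring_nf

/-- For every `η ∈ (0,1)` there are `C > 0` and `N` such that for all `n ≥ N` and
all integers `k` with `1 ≤ k ≤ n^{1-η}`,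
`2^{-2n+k} C(2n-k, n) ≤ (C/√n) exp(-k²/(5n))`. -/
theorem local_time_probability_gaussian_bound
    (η : ℝ) (hη0 : 0 < η) (hη1 : η < 1) :
    ∃ C : ℝ, 0 < C ∧ ∃ N : ℕ, ∀ n : ℕ, N ≤ n → ∀ k : ℕ, 1 ≤ k →
      (k : ℝ) ≤ (n : ℝ) ^ (1 - η) →
      (2 : ℝ) ^ ((k : ℤ) - 2 * n) * (Nat.choose (2 * n - k) n : ℝ) ≤
        (C / Real.sqrt n) * Real.exp (-(k : ℝ) ^ 2 / (5 * n)) := by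
  refine ⟨3, by norm_num, 1, fun n hn k hk1 hkle => ?_⟩
  have hnr : (1:ℝ) ≤ n := by exact_mod_cast hn
  have hnr0 : (0:ℝ) < n := by linarith
  -- k ≤ n
  have hkn : k ≤ n := by
    have h1 : (n:ℝ) ^ (1-η) ≤ (n:ℝ) ^ (1:ℝ) :=
      Real.rpow_le_rpow_of_exponent_le hnr (by linarith)
    rw [Real.rpow_one] at h1
    exact_mod_cast hkle.trans h1
  have hmain := choose_exp_bound n (by omega) k hkn
  have hcb := cb_real_bound n (by omega)
  have hsq : (0:ℝ) < Real.sqrt n := Real.sqrt_pos.mpr hnr0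
  -- rewrite LHS
  have hzpow : (2:ℝ) ^ ((k : ℤ) - 2 * n) = 2^k / 4^n := by
    rw [zpow_sub₀ (by norm_num : (2:ℝ) ≠ 0)]
    rw [show ((2:ℤ) * n) = ((2*n : ℕ) : ℤ) by push_cast; ring]
    rw [zpow_natCast, zpow_natCast, pow_mul]
    norm_num
  rw [hzpow]
  have h4pos : (0:ℝ) < 4^n := by positivity
  -- step 1 : LHS ≤ cb/4^n * exp(-k(k-1)/(4n))
  have step1 : 2^k / 4^n * (Nat.choose (2*n - k) n : ℝ) ≤
      (1 / Real.sqrt n) * Real.exp (-((k:ℝ) * ((k:ℝ)-1))/(4*n)) := by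
    have hcb' : (Nat.centralBinom n : ℝ) / 4^n ≤ 1 / Real.sqrt n := by
      rw [div_le_div_iff₀ h4pos hsq]
      linarith [hcb]
    calc 2^k / 4^n * (Nat.choose (2*n - k) n : ℝ)
        = ((Nat.choose (2*n - k) n : ℝ) * 2^k) / 4^n := by ring
      _ ≤ ((Nat.centralBinom n : ℝ) * Real.exp (-((k:ℝ) * ((k:ℝ)-1))/(4*n))) / 4^n := by
          gcongr
      _ = ((Nat.centralBinom n : ℝ) / 4^n) * Real.exp (-((k:ℝ) * ((k:ℝ)-1))/(4*n)) := by ring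
      _ ≤ (1 / Real.sqrt n) * Real.exp (-((k:ℝ) * ((k:ℝ)-1))/(4*n)) := by
          apply mul_le_mul_of_nonneg_right hcb' (Real.exp_nonneg _)
  -- step 2 : exp(-k(k-1)/(4n)) ≤ 3 exp(-k²/(5n))
  have step2 : Real.exp (-((k:ℝ) * ((k:ℝ)-1))/(4*n)) ≤ 3 * Real.exp (-(k:ℝ)^2/(5*n)) := by
    have he : Real.exp (-((k:ℝ) * ((k:ℝ)-1))/(4*n)) ≤ Real.exp 1 * Real.exp (-(k:ℝ)^2/(5*n)) := by
      rw [← Real.exp_add, Real.exp_le_exp, div_le_iff₀ (by linarith : (0:ℝ) < 4*n)]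
      have hexp : (1 + -(k:ℝ)^2/(5*n)) * (4*(n:ℝ)) = 4*n - (4/5)*(k:ℝ)^2 := by
        field_simp; ring
      rw [hexp]
      nlinarith [sq_nonneg ((k:ℝ) - 5/2)]
    have h3 : Real.exp 1 ≤ 3 := by
      have := Real.exp_one_lt_d9
      linarith
    calc Real.exp (-((k:ℝ) * ((k:ℝ)-1))/(4*n)) ≤ Real.exp 1 * Real.exp (-(k:ℝ)^2/(5*n)) := he
      _ ≤ 3 * Real.exp (-(k:ℝ)^2/(5*n)) :=
        mul_le_mul_of_nonneg_right h3 (Real.exp_nonneg _)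
  calc 2^k / 4^n * (Nat.choose (2*n - k) n : ℝ)
      ≤ (1 / Real.sqrt n) * Real.exp (-((k:ℝ) * ((k:ℝ)-1))/(4*n)) := step1
    _ ≤ (1 / Real.sqrt n) * (3 * Real.exp (-(k:ℝ)^2/(5*n))) := by
        apply mul_le_mul_of_nonneg_left step2 (by positivity)
    _ = (3 / Real.sqrt n) * Real.exp (-(k:ℝ)^2/(5*n)) := by ring
end

section
/- Define p(t) := (2πt)^{−3/2} ∫_0^∞ u e^{−u²/(2t)} / sinh(u/2) du for t > 0 (this is the diagonal value p_{Aff(ℝ)}(t,g,g) of the heat kernel of the Brownian motion on Aff(ℝ)). Then lim_{t→∞} t^{3/2} p(t) = (2π)^{−3/2} ∫_0^∞ u / sinh(u/2) du = π² (2π)^{−3/2}. (Slow polynomial decay of the diagonal of the heat kernel on Aff(ℝ); the paper states the constant as √(π/2), which is twice π²(2π)^{−3/2}.) -/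
open MeasureTheory Filter Real

private lemma aux_per_term {c : ℝ} (hc : 0 < c) :
    ∫ u in Set.Ioi (0:ℝ), 2 * u * Real.exp (-(c*u)) = 2 / c ^ 2 := by
  have h := Real.integral_rpow_mul_exp_neg_mul_Ioi (by norm_num : (0:ℝ) < 2) hc
  rw [Real.Gamma_two, mul_one] at h
  have e1 : ∫ u in Set.Ioi (0:ℝ), u * Real.exp (-(c*u))
      = ∫ t in Set.Ioi (0:ℝ), t ^ ((2:ℝ)-1) * Real.exp (-(c*t)) :=
    setIntegral_congr_fun measurableSet_Ioi (fun x _ => by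
      rw [show ((2:ℝ)-1) = 1 by norm_num, Real.rpow_one])
  have h2 : ∫ u in Set.Ioi (0:ℝ), u * Real.exp (-(c*u)) = 1 / c ^ 2 := by
    rw [e1, h, show ((2:ℝ)) = ((2:ℕ):ℝ) by norm_num, Real.rpow_natCast, div_pow, one_pow]
  calc ∫ u in Set.Ioi (0:ℝ), 2 * u * Real.exp (-(c*u))
      = 2 * ∫ u in Set.Ioi (0:ℝ), u * Real.exp (-(c*u)) := by
        rw [← integral_const_mul]; congr 1; ext u; ring
    _ = 2 / c ^ 2 := by rw [h2]; ring

private lemma aux_per_term_int {c : ℝ} (hc : 0 < c) :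
    IntegrableOn (fun u : ℝ => 2 * u * Real.exp (-(c*u))) (Set.Ioi 0) := by
  have h := integrableOn_rpow_mul_exp_neg_mul_rpow (by norm_num : (-1:ℝ) < 1) one_pos hc
  have h2 : IntegrableOn (fun u : ℝ => u * Real.exp (-(c*u))) (Set.Ioi 0) := by
    refine h.congr_fun (fun x hx => ?_) measurableSet_Ioi
    beta_reduce
    rw [Real.rpow_one, neg_mul]
  simpa [mul_assoc, IntegrableOn] using h2.const_mul 2

private lemma aux_odd_sum : ∑' k : ℕ, (1:ℝ) / ((2*k+1 : ℕ):ℝ) ^ 2 = π ^ 2 / 8 := by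
  have hζ : HasSum (fun n : ℕ => (1:ℝ) / (n:ℝ) ^ 2) (π ^ 2 / 6) := hasSum_zeta_two
  have hshift : Summable (fun k : ℕ => (1:ℝ) / ((k:ℝ)+1) ^ 2) := by
    have := (summable_nat_add_iff 1).mpr hζ.summable
    refine this.congr fun k => by push_cast; ring_nf
  have heven : HasSum (fun k : ℕ => (1:ℝ) / ((2*k : ℕ):ℝ) ^ 2) (π ^ 2 / 24) := by
    have h4 := hζ.mul_left (1/4)
    have he : (π:ℝ)^2/24 = 1/4 * (π^2/6) := by ring
    rw [he]
    refine HasSum.congr_fun h4 fun k => ?_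
    rcases eq_or_ne (k:ℝ) 0 with h | h
    · simp [h]
    · push_cast; field_simp; ring
  have hodd : Summable (fun k : ℕ => (1:ℝ) / ((2*k+1 : ℕ):ℝ) ^ 2) := by
    refine Summable.of_nonneg_of_le (fun k => by positivity) (fun k => ?_) hshift
    gcongr
    push_cast; nlinarith [Nat.cast_nonneg (α := ℝ) k]
  have := tsum_even_add_odd (f := fun n : ℕ => (1:ℝ) / (n:ℝ) ^ 2) heven.summable hodd
  rw [hζ.tsum_eq, heven.tsum_eq] at this
  linarith

private lemma aux_odd_summable : Summable (fun k : ℕ => (1:ℝ) / ((2*k+1 : ℕ):ℝ) ^ 2) := by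
  have hζ : HasSum (fun n : ℕ => (1:ℝ) / (n:ℝ) ^ 2) (π ^ 2 / 6) := hasSum_zeta_two
  have hshift : Summable (fun k : ℕ => (1:ℝ) / ((k:ℝ)+1) ^ 2) := by
    have := (summable_nat_add_iff 1).mpr hζ.summable
    refine this.congr fun k => by push_cast; ring_nf
  refine Summable.of_nonneg_of_le (fun k => by positivity) (fun k => ?_) hshift
  gcongr
  push_cast; nlinarith [Nat.cast_nonneg (α := ℝ) k]

private lemma aux_sum_S : HasSum (fun n : ℕ => 2 / ((n:ℝ) + 1/2) ^ 2) (π ^ 2) := by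
  have h8 := (aux_odd_summable.hasSum.mul_left 8)
  rw [aux_odd_sum] at h8
  have h88 : (8:ℝ) * (π^2/8) = π^2 := by ring
  rw [h88] at h8
  refine HasSum.congr_fun h8 fun n => ?_
  push_cast
  have h : ((n:ℝ) + 1/2) ≠ 0 := by positivity
  field_simp
  ring

private lemma aux_expand {u : ℝ} (hu : 0 < u) :
    HasSum (fun n : ℕ => 2 * u * Real.exp (-(((n:ℝ) + 1/2) * u))) (u / Real.sinh (u/2)) := by
  have hr0 : (0:ℝ) ≤ Real.exp (-u) := (Real.exp_pos _).le
  have hr1 : Real.exp (-u) < 1 := Real.exp_lt_one_iff.mpr (by linarith)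
  have hg := (hasSum_geometric_of_lt_one hr0 hr1).mul_left (2 * u * Real.exp (-(u/2)))
  have hb : (0:ℝ) < Real.exp (-(u/2)) := Real.exp_pos _
  have hblt : Real.exp (-(u/2)) < 1 := Real.exp_lt_one_iff.mpr (by linarith)
  have key : (2 * u * Real.exp (-(u/2))) * (1 - Real.exp (-u))⁻¹ = u / Real.sinh (u/2) := by
    rw [Real.sinh_eq]
    have e2 : Real.exp (-u) = Real.exp (-(u/2)) * Real.exp (-(u/2)) := by
      rw [← Real.exp_add]; ring_nf
    have e1 : Real.exp (u/2) = (Real.exp (-(u/2)))⁻¹ := by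
      rw [← Real.exp_neg]; ring_nf
    rw [e2, e1]
    have h1 : 1 - Real.exp (-(u/2)) * Real.exp (-(u/2)) ≠ 0 := by nlinarith
    field_simp
  rw [← key]
  refine HasSum.congr_fun hg fun n => ?_
  have hexp : -(u/2) + (n:ℕ) * (-u) = -(((n:ℝ) + 1/2) * u) := by ring
  rw [← Real.exp_nat_mul, mul_assoc (2*u), ← Real.exp_add, hexp]

private lemma aux_f_integrable :
    IntegrableOn (fun u : ℝ => u / Real.sinh (u/2)) (Set.Ioi 0) := by
  have hmeas : Measurable (fun u : ℝ => u / Real.sinh (u/2)) :=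
    measurable_id.div (Real.continuous_sinh.measurable.comp (measurable_id.div_const 2))
  rw [← Set.Ioc_union_Ioi_eq_Ioi (zero_le_one (α := ℝ)), integrableOn_union]
  constructor
  · refine Measure.integrableOn_of_bounded (M := 2) (by simp) hmeas.aestronglyMeasurable ?_
    filter_upwards [ae_restrict_mem measurableSet_Ioc] with u hu
    obtain ⟨h0, h1⟩ := hu
    have hs : u / 2 < Real.sinh (u/2) := Real.self_lt_sinh_iff.mpr (by linarith)
    rw [Real.norm_eq_abs, abs_of_nonneg (div_nonneg h0.le (by linarith))]
    rw [div_le_iff₀ (by linarith)]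
    nlinarith
  · have hC : (0:ℝ) < 1 - Real.exp (-1) := by
      have : Real.exp (-1) < 1 := Real.exp_lt_one_iff.mpr (by norm_num)
      linarith
    refine Integrable.mono' (((exp_neg_integrableOn_Ioi 1
      (by norm_num : (0:ℝ) < 1/4)).const_mul (8 / (1 - Real.exp (-1)))))
      hmeas.aestronglyMeasurable ?_
    filter_upwards [ae_restrict_mem measurableSet_Ioi] with u (hu : 1 < u)
    have hu0 : (0:ℝ) < u := by linarith
    have hsinh : Real.exp (u/2) * (1 - Real.exp (-1)) / 2 ≤ Real.sinh (u/2) := by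
      rw [Real.sinh_eq]
      have h1 : Real.exp (-(u/2)) ≤ Real.exp (u/2) * Real.exp (-1) := by
        rw [← Real.exp_add]
        exact Real.exp_le_exp.mpr (by linarith)
      have := Real.exp_pos (u/2)
      nlinarith
    have hspos : (0:ℝ) < Real.sinh (u/2) := Real.sinh_pos_iff.mpr (by linarith)
    rw [Real.norm_eq_abs, abs_of_nonneg (div_nonneg hu0.le hspos.le)]
    have hu4 : u ≤ 4 * Real.exp (u/4) := by
      have := Real.add_one_le_exp (u/4)
      linarith
    calc u / Real.sinh (u/2) ≤ (4 * Real.exp (u/4)) / (Real.exp (u/2) * (1 - Real.exp (-1)) / 2) := by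
          gcongr
        _ = 8 / (1 - Real.exp (-1)) * Real.exp (-(1/4) * u) := by
          have he : Real.exp (u/2) = Real.exp (u/4) * Real.exp (u/4) := by
            rw [← Real.exp_add]; ring_nf
          have hn : Real.exp (-(1/4) * u) = (Real.exp (u/4))⁻¹ := by
            rw [← Real.exp_neg]; ring_nf
          rw [he, hn]
          have := Real.exp_pos (u/4)
          field_simp
          ring

private lemma aux_int_value : ∫ u in Set.Ioi (0:ℝ), u / Real.sinh (u/2) = π ^ 2 := by
  have hc : ∀ n : ℕ, (0:ℝ) < (n:ℝ) + 1/2 := fun n => by positivity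
  set g : ℕ → ℝ → ℝ := fun n u => 2 * u * Real.exp (-(((n:ℝ) + 1/2) * u)) with hg
  have hgm : ∀ n, AEStronglyMeasurable (g n) (volume.restrict (Set.Ioi 0)) := fun n =>
    (by fun_prop : Continuous (g n)).aestronglyMeasurable
  have hlin : ∀ n, ∫⁻ u in Set.Ioi (0:ℝ), ‖g n u‖₊
      = ENNReal.ofReal (2 / ((n:ℝ) + 1/2) ^ 2) := by
    intro n
    rw [← aux_per_term (hc n),
      ofReal_integral_eq_lintegral_ofReal (aux_per_term_int (hc n))
        ((ae_restrict_mem measurableSet_Ioi).mono fun u hu => by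
          have : (0:ℝ) < u := hu
          positivity)]
    refine lintegral_congr_ae ?_
    filter_upwards [ae_restrict_mem measurableSet_Ioi] with u (hu : (0:ℝ) < u)
    rw [← Real.enorm_eq_ofReal (by positivity)]; rfl
  have hcond : ∑' n, ∫⁻ u in Set.Ioi (0:ℝ), ‖g n u‖₊ ≠ ⊤ := by
    simp_rw [hlin]
    rw [← ENNReal.ofReal_tsum_of_nonneg (fun n => by positivity) aux_sum_S.summable]
    exact ENNReal.ofReal_ne_top
  calc ∫ u in Set.Ioi (0:ℝ), u / Real.sinh (u/2)
      = ∫ u in Set.Ioi (0:ℝ), ∑' n, g n u :=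
        setIntegral_congr_fun measurableSet_Ioi (fun u hu => ((aux_expand hu).tsum_eq).symm)
    _ = ∑' n, ∫ u in Set.Ioi (0:ℝ), g n u := integral_tsum hgm hcond
    _ = ∑' (n : ℕ), 2 / ((n:ℝ) + 1/2) ^ 2 := tsum_congr fun n => aux_per_term (hc n)
    _ = π ^ 2 := aux_sum_S.tsum_eq

private lemma aux_int_limit :
    Filter.Tendsto (fun t : ℝ => ∫ u in Set.Ioi (0:ℝ),
      u * Real.exp (-u^2 / (2*t)) / Real.sinh (u/2)) atTop
      (nhds (∫ u in Set.Ioi (0:ℝ), u / Real.sinh (u/2))) := by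
  refine tendsto_integral_filter_of_dominated_convergence
    (fun u => u / Real.sinh (u/2)) ?_ ?_ aux_f_integrable ?_
  · filter_upwards with t
    have : Measurable (fun u : ℝ => u * Real.exp (-u^2 / (2*t)) / Real.sinh (u/2)) := by
      fun_prop
    exact this.aestronglyMeasurable
  · filter_upwards [eventually_gt_atTop (0:ℝ)] with t ht
    filter_upwards [ae_restrict_mem measurableSet_Ioi] with u (hu : (0:ℝ) < u)
    have hs : (0:ℝ) < Real.sinh (u/2) := Real.sinh_pos_iff.mpr (by linarith)
    have hle : Real.exp (-u^2 / (2*t)) ≤ 1 := by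
      rw [Real.exp_le_one_iff]
      apply div_nonpos_of_nonpos_of_nonneg <;> nlinarith
    rw [Real.norm_eq_abs, abs_of_nonneg (by positivity)]
    rw [div_le_div_iff₀ hs hs]
    nlinarith [mul_le_mul_of_nonneg_left hle (mul_pos hu hs).le]
  · filter_upwards [ae_restrict_mem measurableSet_Ioi] with u (hu : (0:ℝ) < u)
    have h1 : Tendsto (fun t : ℝ => -u^2 / (2*t)) atTop (nhds 0) := by
      simp_rw [div_eq_mul_inv]
      have h2 : Tendsto (fun t : ℝ => (2*t)⁻¹) atTop (nhds 0) :=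
        tendsto_inv_atTop_zero.comp (tendsto_id.const_mul_atTop two_pos)
      simpa using h2.const_mul (-u^2)
    have h3 : Tendsto (fun t : ℝ => Real.exp (-u^2 / (2*t))) atTop (nhds 1) := by
      simpa [Function.comp_def] using (Real.continuous_exp.tendsto 0).comp h1
    have h4 := (h3.const_mul u).div_const (Real.sinh (u/2))
    simpa using h4

/-- **Slow polynomial decay of the diagonal heat kernel on `Aff(ℝ)`**: with
`p(t) = (2πt)^{-3/2} ∫_0^∞ u e^{-u²/(2t)} / sinh(u/2) du`, one has
`lim_{t→∞} t^{3/2} p(t) = (2π)^{-3/2} ∫_0^∞ u / sinh(u/2) du`, and this integral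
equals `π²`. -/
theorem heat_kernel_diagonal_large_time_asymptotics
    (p : ℝ → ℝ)
    (hp : ∀ t : ℝ, 0 < t → p t = (2 * π * t) ^ (-(3:ℝ)/2) *
      ∫ u in Set.Ioi (0:ℝ), u * Real.exp (-u^2 / (2*t)) / Real.sinh (u/2)) :
    Filter.Tendsto (fun t : ℝ => t ^ ((3:ℝ)/2) * p t) Filter.atTop
      (nhds ((2 * π) ^ (-(3:ℝ)/2) * ∫ u in Set.Ioi (0:ℝ), u / Real.sinh (u/2))) ∧
    (∫ u in Set.Ioi (0:ℝ), u / Real.sinh (u/2)) = π ^ 2 := by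
  constructor
  · have hI := aux_int_limit.const_mul ((2 * π) ^ (-(3:ℝ)/2))
    refine hI.congr' ?_
    filter_upwards [eventually_gt_atTop (0:ℝ)] with t ht
    rw [hp t ht]
    have h2π : (0:ℝ) ≤ 2 * π := by positivity
    rw [Real.mul_rpow h2π ht.le]
    have ht0 : t ^ ((3:ℝ)/2) * t ^ (-(3:ℝ)/2) = 1 := by
      rw [← Real.rpow_add ht]; norm_num
    set J := ∫ u in Set.Ioi (0:ℝ), u * Real.exp (-u^2 / (2*t)) / Real.sinh (u/2) with hJ
    calc (2 * π) ^ (-(3:ℝ)/2) * J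
        = (2 * π) ^ (-(3:ℝ)/2) * ((t ^ ((3:ℝ)/2) * t ^ (-(3:ℝ)/2)) * J) := by
          rw [ht0]; ring
      _ = t ^ ((3:ℝ)/2) * ((2 * π) ^ (-(3:ℝ)/2) * t ^ (-(3:ℝ)/2) * J) := by ring
  · exact aux_int_value
end
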